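/- Let B be a (left) brace of abelian type and let z be an element of the center of the multiplicative group B° with z ∘ z = 0. Then the additive cyclic subgroup ⟨z⟩₊ generated by z is closed under the multiplication ∘, hence forms a subbrace of B, and as a brace it is isomorphic to B_k for some k, where B_k is the brace on ℤ/2^kℤ with usual addition and multiplication a ∘ b = a + b - 2ab. -/

import Mathlib

/-- in a finite brace (of abelian type), a central multiplicative
involution `z` generates an additive subgroup `⟨z⟩₊` that is closed under the brace
multiplication, with `(m•z) ∘ (n•z) = (m+n-2mn)•z`, and `⟨z⟩₊` is (additively, hence
as a brace via this multiplication formula) isomorphic to `B_k = ℤ/2^kℤ` for some `k`. -/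
theorem central_involution_generates_Bk
    (B : Type*) [Finite B] [AddCommGroup B] [Group B]
    (hbrace : ∀ a b c : B, a * (b + c) = a * b - a + a * c)
    (z : B) (hzc : ∀ g : B, z * g = g * z) (hz2 : z * z = 1) :
    (∀ m n : ℤ, (m • z) * (n • z) = (m + n - 2 * m * n) • z) ∧
    ∃ k : ℕ, Nonempty ((AddSubgroup.zmultiples z) ≃+ ZMod (2 ^ k)) := by
  -- `a * 0 = a`
  have h0 : ∀ a : B, a * 0 = a := by
    intro a
    have h := hbrace a 0 0
    rw [add_zero] at h
    have h2 : a * 0 + a = a * 0 + a * 0 := by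
      conv_lhs => rw [h]
      abel
    exact (add_left_cancel h2).symm
  -- the two identities coincide
  have h1 : (1 : B) = 0 := (h0 1).symm.trans (one_mul 0)
  have hzz : z * z = 0 := hz2.trans h1
  -- the lambda maps are additive
  let L : B → B →+ B := fun a =>
    AddMonoidHom.mk' (fun b => a * b - a) (by
      intro b c
      show a * (b + c) - a = (a * b - a) + (a * c - a)
      rw [hbrace]
      abel)
  have hL : ∀ (a : B) (n : ℤ) (b : B), a * (n • b) - a = n • (a * b - a) := by
    intro a n b
    exact (L a).map_zsmul n b
  -- lambda of z on multiples of z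
  have hz_smul : ∀ m : ℤ, (m • z) * z = z - m • z := by
    intro m
    rw [← hzc]
    have h := hL z m z
    rw [hzz, zero_sub, smul_neg] at h
    have h' : z * (m • z) = -(m • z) + z := sub_eq_iff_eq_add.mp h
    rw [h']
    abel
  have key : ∀ m n : ℤ, (m • z) * (n • z) = (m + n - 2 * m * n) • z := by
    intro m n
    have h := hL (m • z) n z
    rw [hz_smul m] at h
    have h' : (m • z) * (n • z) = n • (z - m • z - m • z) + m • z :=
      sub_eq_iff_eq_add.mp h
    rw [h']
    module
  refine ⟨key, ?_⟩
  -- the additive order of z is a power of 2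
  set d : ℕ := addOrderOf z with hd
  have hd0 : d ≠ 0 := (addOrderOf_pos z).ne'
  have hodd : ∀ p : ℕ, p.Prime → p ∣ d → p = 2 := by
    intro p hp hpd
    by_contra hp2
    have hp_odd : Odd p := hp.odd_of_ne_two hp2
    -- choose m with 2 * m - 1 = p
    set m : ℤ := (((p + 1) / 2 : ℕ) : ℤ) with hm
    have h2m : 2 * m - 1 = (p : ℤ) := by
      have hnat : ((p + 1) / 2 : ℕ) * 2 = p + 1 := by
        obtain ⟨t, ht⟩ := hp_odd
        omega
      have := congrArg (Nat.cast : ℕ → ℤ) hnat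
      push_cast at this
      omega
    set a : B := m • z with ha
    -- powers of a
    have hpow : ∀ j : ℕ, ∃ c : ℤ, a ^ j = c • z ∧ (j ≠ 0 → (p : ℤ) ∣ 2 * c - 1) := by
      intro j
      induction j with
      | zero =>
        exact ⟨0, by simpa using h1, by simp⟩
      | succ j ih =>
        obtain ⟨c, hc, _⟩ := ih
        refine ⟨c + m - 2 * c * m, ?_, ?_⟩
        · rw [pow_succ, hc, ha, key]
        · intro _
          have : 2 * (c + m - 2 * c * m) - 1 = (2 * m - 1) * (1 - 2 * c) := by ring
          rw [this, h2m]
          exact Dvd.intro _ rfl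
    -- a has finite multiplicative order
    obtain ⟨c, hc, hdvd⟩ := hpow (orderOf a)
    have hord : a ^ orderOf a = 1 := pow_orderOf_eq_one a
    have hcz : c • z = 0 := by rw [← hc, hord, h1]
    have hdc : (d : ℤ) ∣ c := by
      rwa [← addOrderOf_dvd_iff_zsmul_eq_zero] at hcz
    have hpc : (p : ℤ) ∣ c := dvd_trans (Int.natCast_dvd_natCast.mpr hpd) hdc
    have hdvd1 := hdvd (orderOf_pos a).ne'
    have : (p : ℤ) ∣ 1 := by
      have := dvd_sub (Dvd.dvd.mul_left hpc 2) hdvd1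
      simpa using this
    have : p ∣ 1 := by exact_mod_cast this
    exact hp.one_lt.ne' (Nat.dvd_one.mp this)
  obtain hpow2 : ∃ k : ℕ, d = 2 ^ k :=
    ⟨_, Nat.eq_prime_pow_of_unique_prime_dvd hd0 (fun {q} hq hqd => hodd q hq hqd)⟩
  obtain ⟨k, hk⟩ := hpow2
  refine ⟨k, ?_⟩
  have hcyc : IsAddCyclic (AddSubgroup.zmultiples z) := by
    refine ⟨⟨⟨z, AddSubgroup.mem_zmultiples z⟩, ?_⟩⟩
    rintro ⟨x, hx⟩
    obtain ⟨n, hn⟩ := AddSubgroup.mem_zmultiples_iff.mp hx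
    exact ⟨n, by ext; simpa using hn⟩
  have hcard : Nat.card (AddSubgroup.zmultiples z) = 2 ^ k := by
    rw [Nat.card_zmultiples, ← hd, hk]
  have e := (zmodAddCyclicAddEquiv hcyc).symm
  rw [hcard] at e
  exact ⟨e⟩
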